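/- Let G be a finite simple graph and let H be any induced subgraph of G with at least 2 vertices. Then min-bal-cutrank(H) ≤ rankwidth(G). -/

import Mathlib

open Classical

/-- The cutrank of a pair of vertex sets `X`, `Y` in a graph `G`:
the rank over `𝔽₂` of the `X × Y` biadjacency matrix. -/
noncomputable def cutrank {V : Type*} (G : SimpleGraph V) (X Y : Finset V) : ℕ :=
  Matrix.rank (Matrix.of fun (x : X) (y : Y) => if G.Adj x.1 y.1 then (1 : ZMod 2) else 0)


/-- `(X, Y)` is a balanced partition of the vertex set `S`:
`X ⊔ Y = S` and both parts have size at most `(2/3)|S|`. -/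
def IsBalancedPartitionOf {V : Type*} (S X Y : Finset V) : Prop :=
  X ∪ Y = S ∧ Disjoint X Y ∧ 3 * X.card ≤ 2 * S.card ∧ 3 * Y.card ≤ 2 * S.card

/-- The minimum balanced cutrank of the induced subgraph `G[S]`:
the minimum of `cutrank G X Y` over balanced partitions `(X, Y)` of `S`.
(For `X, Y ⊆ S`, the biadjacency matrix in `G[S]` coincides with that in `G`.) -/
noncomputable def minBalCutrank {V : Type*} (G : SimpleGraph V) (S : Finset V) : ℕ :=
  sInf {k | ∃ X Y : Finset V, IsBalancedPartitionOf S X Y ∧ cutrank G X Y = k}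

/-- A rank-decomposition of a graph on vertex type `V`: a subcubic tree
together with a bijection from `V` to the leaves (degree-1 vertices) of the tree. -/
structure RankDecomp (V : Type*) [Fintype V] where
  n : ℕ
  tree : SimpleGraph (Fin n)
  isTree : tree.IsTree
  subcubic : ∀ t : Fin n, tree.degree t ≤ 3
  leaf : V → Fin n
  leafDeg : ∀ v : V, tree.degree (leaf v) = 1
  leafInj : Function.Injective leaf
  leafSurj : ∀ t : Fin n, tree.degree t = 1 → ∃ v : V, leaf v = t

/-- The side of the edge `{u, v}` of the decomposition tree containing `u`:
all vertices of `G` whose leaf lies in the component of `u` after deleting the edge. -/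
noncomputable def RankDecomp.side {V : Type*} [Fintype V] (d : RankDecomp V) (u v : Fin d.n) :
    Finset V :=
  Finset.univ.filter fun x => (d.tree.deleteEdges {s(u, v)}).Reachable (d.leaf x) u

/-- The decomposition `d` has width at most `k` for the graph `G`: every edge of the
tree induces a partition of the vertices of cutrank at most `k`. -/
def RankDecomp.widthLE {V : Type*} [Fintype V] (G : SimpleGraph V) (d : RankDecomp V) (k : ℕ) :
    Prop :=
  ∀ u v : Fin d.n, d.tree.Adj u v → cutrank G (d.side u v) (d.side v u) ≤ k

/-- The rankwidth of `G`: the minimum width of a rank-decomposition of `G`. -/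
noncomputable def rankwidth {V : Type*} [Fintype V] (G : SimpleGraph V) : ℕ :=
  sInf {k | ∃ d : RankDecomp V, RankDecomp.widthLE G d k}
section TreeLemmas
open SimpleGraph Walk
variable {α : Type*} [DecidableEq α] {G : SimpleGraph α}

lemma RW.bridge_not_reachable (hac : G.IsAcyclic) {u a : α} (h : G.Adj u a) :
    ¬ (G.deleteEdges {s(u,a)}).Reachable u a := by
  have hb := (isAcyclic_iff_forall_adj_isBridge.mp hac) h
  rw [isBridge_iff] at hb
  exact hb

lemma RW.mem_del_edgeSet {s : Set (Sym2 α)} {e : Sym2 α} :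
    e ∈ (G.deleteEdges s).edgeSet ↔ e ∈ G.edgeSet ∧ e ∉ s := by
  induction e using Sym2.ind with
  | _ x y => simp [SimpleGraph.mem_edgeSet]

lemma RW.mem_support_of_mem_edges {t b x : α} {H : SimpleGraph α} (w : H.Walk t b)
    {e : Sym2 α} (he : e ∈ w.edges) (hx : x ∈ e) : x ∈ w.support := by
  induction e using Sym2.ind with
  | _ c d =>
    rcases Sym2.mem_iff.mp hx with rfl | rfl
    · exact w.fst_mem_support_of_mem_edges he
    · exact w.snd_mem_support_of_mem_edges he

lemma RW.transfer_avoid {t b x y : α} {s : Set (Sym2 α)} (w : (G.deleteEdges s).Walk t b)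
    (hx : x ∉ w.support) :
    ∃ w' : (G.deleteEdges {s(x,y)}).Walk t b, w'.support = w.support := by
  have hedges : ∀ e ∈ w.edges, e ∈ (G.deleteEdges {s(x,y)}).edgeSet := by
    intro e he
    have h1 : e ∈ (G.deleteEdges s).edgeSet := w.edges_subset_edgeSet he
    rw [RW.mem_del_edgeSet] at h1 ⊢
    refine ⟨h1.1, ?_⟩
    intro hmem
    rw [Set.mem_singleton_iff] at hmem
    subst hmem
    exact hx (RW.mem_support_of_mem_edges w he (Sym2.mem_mk_left x y))
  exact ⟨w.transfer _ hedges, w.support_transfer _⟩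

lemma RW.exists_walk_avoid (hac : G.IsAcyclic) {u a t : α} (h : G.Adj u a)
    (hr : (G.deleteEdges {s(a,u)}).Reachable t a) :
    ∃ w : (G.deleteEdges {s(a,u)}).Walk t a, u ∉ w.support := by
  obtain ⟨w0⟩ := hr
  by_cases hu : u ∈ w0.bypass.support
  · exfalso
    exact RW.bridge_not_reachable hac h.symm ((w0.bypass.dropUntil u hu).reachable.symm)
  · exact ⟨w0.bypass, hu⟩

lemma RW.side_mono (hac : G.IsAcyclic) {u v a t : α} (huv : G.Adj u v) (hua : G.Adj u a)
    (hav : a ≠ v) (hr : (G.deleteEdges {s(a,u)}).Reachable t a) :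
    (G.deleteEdges {s(u,v)}).Reachable t u := by
  obtain ⟨w, hw⟩ := RW.exists_walk_avoid hac hua hr
  obtain ⟨w', -⟩ := RW.transfer_avoid (y := v) w hw
  refine w'.reachable.trans (Adj.reachable ?_)
  rw [SimpleGraph.deleteEdges_adj]
  refine ⟨hua.symm, ?_⟩
  simp only [Set.mem_singleton_iff, Sym2.eq_iff]
  rintro (⟨rfl, rfl⟩ | ⟨rfl, -⟩)
  · exact hua.ne rfl
  · exact hav rfl

lemma RW.side_cover {u v t : α} (huv : G.Adj u v) (ht : t ≠ u)
    (hr : (G.deleteEdges {s(u,v)}).Reachable t u) :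
    ∃ a, G.Adj u a ∧ a ≠ v ∧ (G.deleteEdges {s(a,u)}).Reachable t a := by
  obtain ⟨w0⟩ := hr
  have hp : w0.bypass.IsPath := w0.bypass_isPath
  have hq : w0.bypass.reverse.IsPath := hp.reverse
  obtain ⟨a, hadj, q', hq'⟩ := Walk.exists_eq_cons_of_ne (Ne.symm ht) w0.bypass.reverse
  rw [hq'] at hq
  rw [Walk.cons_isPath_iff] at hq
  have hGua : G.Adj u a := (SimpleGraph.deleteEdges_adj.mp hadj).1
  have hne : s(u, a) ∉ ({s(u,v)} : Set (Sym2 α)) := (SimpleGraph.deleteEdges_adj.mp hadj).2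
  have hav : a ≠ v := by
    rintro rfl
    exact hne rfl
  have hu : u ∉ q'.reverse.support := by simpa using hq.2
  obtain ⟨w', -⟩ := RW.transfer_avoid (y := a) (x := u) q'.reverse hu
  refine ⟨a, hGua, hav, ?_⟩
  have : ({s(u,a)} : Set (Sym2 α)) = {s(a,u)} := by rw [Sym2.eq_swap]
  rw [this] at w'
  exact w'.reachable

lemma RW.side_disjoint (hac : G.IsAcyclic) {u a b t : α} (hua : G.Adj u a) (hub : G.Adj u b)
    (hab : a ≠ b) (h1 : (G.deleteEdges {s(a,u)}).Reachable t a)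
    (h2 : (G.deleteEdges {s(b,u)}).Reachable t b) : False := by
  obtain ⟨w1, hw1⟩ := RW.exists_walk_avoid hac hua h1
  obtain ⟨w2, hw2⟩ := RW.exists_walk_avoid hac hub h2
  obtain ⟨w2', -⟩ := RW.transfer_avoid (x := u) (y := a) w2 hw2
  have hswap : ({s(u,a)} : Set (Sym2 α)) = {s(a,u)} := by rw [Sym2.eq_swap]
  rw [hswap] at w2'
  refine RW.bridge_not_reachable hac hua.symm ?_
  refine (w1.reverse.append w2').reachable.trans (Adj.reachable ?_)
  rw [SimpleGraph.deleteEdges_adj]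
  refine ⟨hub.symm, ?_⟩
  simp only [Set.mem_singleton_iff, Sym2.eq_iff]
  rintro (⟨rfl, -⟩ | ⟨rfl, rfl⟩)
  · exact hab rfl
  · exact hub.ne rfl

lemma RW.walk_cases {u v : α} :
    ∀ {x y : α} (_ : G.Walk x y),
      (G.deleteEdges {s(u,v)}).Reachable x y ∨
      ((G.deleteEdges {s(u,v)}).Reachable x u ∧ (G.deleteEdges {s(u,v)}).Reachable y v) ∨
      ((G.deleteEdges {s(u,v)}).Reachable x v ∧ (G.deleteEdges {s(u,v)}).Reachable y u) := by
  intro x y w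
  induction w with
  | nil => exact Or.inl (Reachable.refl _)
  | @cons x x' y h q ih =>
    by_cases he : s(x, x') = s(u, v)
    · rw [Sym2.eq_iff] at he
      rcases he with ⟨rfl, rfl⟩ | ⟨rfl, rfl⟩
      · rcases ih with h1 | ⟨h1, h2⟩ | ⟨h1, h2⟩
        · exact Or.inr (Or.inl ⟨Reachable.refl _, h1.symm⟩)
        · exact Or.inl (h1.symm.trans h2.symm)
        · exact Or.inl h2.symm
      · rcases ih with h1 | ⟨h1, h2⟩ | ⟨h1, h2⟩
        · exact Or.inr (Or.inr ⟨Reachable.refl _, h1.symm⟩)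
        · exact Or.inl h2.symm
        · exact Or.inl (h1.symm.trans h2.symm)
    · have hadj : (G.deleteEdges {s(u,v)}).Adj x x' := by
        rw [SimpleGraph.deleteEdges_adj]
        exact ⟨h, by simpa using he⟩
      rcases ih with h1 | ⟨h1, h2⟩ | ⟨h1, h2⟩
      · exact Or.inl (hadj.reachable.trans h1)
      · exact Or.inr (Or.inl ⟨hadj.reachable.trans h1, h2⟩)
      · exact Or.inr (Or.inr ⟨hadj.reachable.trans h1, h2⟩)

lemma RW.reachable_del_total (hc : G.Connected) {u v t : α} :
    (G.deleteEdges {s(u,v)}).Reachable t u ∨ (G.deleteEdges {s(u,v)}).Reachable t v := by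
  obtain ⟨w⟩ := hc.preconnected t u
  rcases RW.walk_cases (u := u) (v := v) w with h1 | ⟨h1, h2⟩ | ⟨h1, h2⟩
  · exact Or.inl h1
  · exact Or.inl h1
  · exact Or.inr h1
end TreeLemmas
section DecompLemmas
open SimpleGraph Walk Finset
variable {V : Type*} [Fintype V]

namespace RW

lemma mem_side {d : RankDecomp V} {u v : Fin d.n} {x : V} :
    x ∈ d.side u v ↔ (d.tree.deleteEdges {s(u, v)}).Reachable (d.leaf x) u := by
  simp [RankDecomp.side]

lemma mem_side' {d : RankDecomp V} {u v : Fin d.n} {x : V} :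
    x ∈ d.side v u ↔ (d.tree.deleteEdges {s(u, v)}).Reachable (d.leaf x) v := by
  rw [mem_side, show ({s(v,u)} : Set (Sym2 (Fin d.n))) = {s(u,v)} by rw [Sym2.eq_swap]]

lemma side_union {d : RankDecomp V} {u v : Fin d.n} (huv : d.tree.Adj u v) :
    d.side u v ∪ d.side v u = Finset.univ := by
  apply Finset.eq_univ_of_forall
  intro x
  rw [Finset.mem_union, mem_side, mem_side']
  exact RW.reachable_del_total d.isTree.1 (t := d.leaf x) (u := u) (v := v)

lemma sides_disjoint {d : RankDecomp V} {u v : Fin d.n} (huv : d.tree.Adj u v) :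
    Disjoint (d.side u v) (d.side v u) := by
  rw [Finset.disjoint_left]
  intro x h1 h2
  rw [mem_side] at h1
  rw [mem_side'] at h2
  exact RW.bridge_not_reachable d.isTree.2 huv (h1.symm.trans h2)

lemma wt_add_wt {d : RankDecomp V} {u v : Fin d.n} (huv : d.tree.Adj u v) (S : Finset V) :
    (d.side u v ∩ S).card + (d.side v u ∩ S).card = S.card := by
  rw [← Finset.card_union_of_disjoint
      ((sides_disjoint huv).mono (Finset.inter_subset_left) (Finset.inter_subset_left))]
  congr 1
  rw [← Finset.union_inter_distrib_right, side_union huv, Finset.univ_inter]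

lemma side_of_degree_one {d : RankDecomp V} {u v : Fin d.n} (huv : d.tree.Adj u v)
    (hdeg : d.tree.degree u = 1) :
    d.side u v = Finset.univ.filter fun x => d.leaf x = u := by
  ext x
  rw [mem_side, Finset.mem_filter]
  simp only [Finset.mem_univ, true_and]
  constructor
  · intro hr
    by_contra hne
    obtain ⟨a, hua, hav, -⟩ := RW.side_cover huv hne hr
    have h2 : 1 < (d.tree.neighborFinset u).card :=
      Finset.one_lt_card.mpr ⟨a, (d.tree.mem_neighborFinset u a).mpr hua, v,
        (d.tree.mem_neighborFinset u v).mpr huv, hav⟩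
    rw [← SimpleGraph.degree, hdeg] at h2
    exact lt_irrefl _ h2
  · rintro rfl
    exact Reachable.refl _

lemma wt_of_degree_one {d : RankDecomp V} {u v : Fin d.n} (huv : d.tree.Adj u v)
    (hdeg : d.tree.degree u = 1) (S : Finset V) : (d.side u v ∩ S).card ≤ 1 := by
  rw [side_of_degree_one huv hdeg]
  rw [Finset.card_le_one_iff]
  intro a b ha hb
  simp only [Finset.mem_inter, Finset.mem_filter] at ha hb
  exact d.leafInj (ha.1.2.trans hb.1.2.symm)

lemma leaf_ne_of_degree {d : RankDecomp V} {u : Fin d.n} (hdeg : 2 ≤ d.tree.degree u) (x : V) :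
    d.leaf x ≠ u := by
  intro h
  have := d.leafDeg x
  rw [h] at this
  omega

lemma side_eq_biUnion {d : RankDecomp V} {u v : Fin d.n} (huv : d.tree.Adj u v)
    (hdeg : 2 ≤ d.tree.degree u) (S : Finset V) :
    d.side u v ∩ S = ((d.tree.neighborFinset u).erase v).biUnion
      fun a => d.side a u ∩ S := by
  ext x
  simp only [Finset.mem_inter, Finset.mem_biUnion, Finset.mem_erase,
    SimpleGraph.mem_neighborFinset]
  constructor
  · rintro ⟨hx, hxS⟩
    rw [mem_side] at hx
    obtain ⟨a, hua, hav, hr⟩ := RW.side_cover huv (leaf_ne_of_degree hdeg x) hx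
    exact ⟨a, ⟨hav, hua⟩, mem_side.mpr hr, hxS⟩
  · rintro ⟨a, ⟨hav, hua⟩, hx, hxS⟩
    rw [mem_side] at hx
    exact ⟨mem_side.mpr (RW.side_mono d.isTree.2 huv hua hav hx), hxS⟩

lemma wt_eq_sum {d : RankDecomp V} {u v : Fin d.n} (huv : d.tree.Adj u v)
    (hdeg : 2 ≤ d.tree.degree u) (S : Finset V) :
    (d.side u v ∩ S).card = ∑ a ∈ (d.tree.neighborFinset u).erase v, (d.side a u ∩ S).card := by
  rw [side_eq_biUnion huv hdeg S]
  apply Finset.card_biUnion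
  intro a ha b hb hab
  rw [Finset.mem_coe, Finset.mem_erase, SimpleGraph.mem_neighborFinset] at ha hb
  rw [Function.onFun, Finset.disjoint_left]
  intro x h1 h2
  rw [Finset.mem_inter, mem_side] at h1 h2
  exact RW.side_disjoint d.isTree.2 ha.2 hb.2 hab h1.1 h2.1

lemma ct_lt_ct {d : RankDecomp V} {u v a : Fin d.n} (huv : d.tree.Adj u v)
    (hua : d.tree.Adj u a) (hav : a ≠ v) :
    (Finset.univ.filter fun t => (d.tree.deleteEdges {s(a,u)}).Reachable t a).card <
      (Finset.univ.filter fun t => (d.tree.deleteEdges {s(u,v)}).Reachable t u).card := by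
  apply Finset.card_lt_card
  rw [Finset.ssubset_iff_of_subset]
  · refine ⟨u, ?_, ?_⟩
    · simp only [Finset.mem_filter, Finset.mem_univ, true_and]
      exact Reachable.refl _
    · simp only [Finset.mem_filter, Finset.mem_univ, true_and]
      intro hr
      exact RW.bridge_not_reachable d.isTree.2 hua.symm (hr.symm)
  · intro t ht
    simp only [Finset.mem_filter, Finset.mem_univ, true_and] at ht ⊢
    exact RW.side_mono d.isTree.2 huv hua hav ht

lemma side_subset_side {d : RankDecomp V} {u v a : Fin d.n} (huv : d.tree.Adj u v)
    (hua : d.tree.Adj u a) (hav : a ≠ v) : d.side a u ⊆ d.side u v := by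
  intro x hx
  rw [mem_side] at hx ⊢
  exact RW.side_mono d.isTree.2 huv hua hav hx

/-- The balanced-separation lemma: some edge of the decomposition tree splits `S`
in a balanced way. -/
lemma exists_balanced_edge (d : RankDecomp V) (S : Finset V) (hS : 2 ≤ S.card) :
    ∃ u v : Fin d.n, d.tree.Adj u v ∧ 3 * (d.side u v ∩ S).card ≤ 2 * S.card ∧
      3 * (d.side v u ∩ S).card ≤ 2 * S.card := by
  by_contra hcon
  push_neg at hcon
  have hcon' : ∀ u v : Fin d.n, d.tree.Adj u v →
      2 * S.card < 3 * (d.side u v ∩ S).card ∨ 2 * S.card < 3 * (d.side v u ∩ S).card := by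
    intro u v h
    rcases Nat.lt_or_ge (2 * S.card) (3 * (d.side u v ∩ S).card) with h' | h'
    · exact Or.inl h'
    · exact Or.inr (hcon u v h (by omega))
  have hCle : ∀ u v : Fin d.n,
      (Finset.univ.filter fun t => (d.tree.deleteEdges {s(u,v)}).Reachable t u).card ≤ d.n := by
    intro u v
    calc (Finset.univ.filter fun t => (d.tree.deleteEdges {s(u,v)}).Reachable t u).card
        ≤ (Finset.univ : Finset (Fin d.n)).card := Finset.card_filter_le _ _
    _ = d.n := by simp
  -- the candidate set
  set P : Finset (Fin d.n × Fin d.n) := Finset.univ.filter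
    (fun p => d.tree.Adj p.1 p.2 ∧ 2 * S.card < 3 * (d.side p.1 p.2 ∩ S).card) with hP
  have hmemP : ∀ p : Fin d.n × Fin d.n, p ∈ P ↔
      d.tree.Adj p.1 p.2 ∧ 2 * S.card < 3 * (d.side p.1 p.2 ∩ S).card := by
    intro p; simp [hP]
  -- P is nonempty
  have hPne : P.Nonempty := by
    obtain ⟨x, hx, y, hy, hxy⟩ := Finset.one_lt_card.mp (by omega : 1 < S.card)
    have hlne : d.leaf x ≠ d.leaf y := fun h => hxy (d.leafInj h)
    obtain ⟨w⟩ := d.isTree.1.preconnected (d.leaf x) (d.leaf y)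
    obtain ⟨b, hadj, -, -⟩ := Walk.exists_eq_cons_of_ne hlne w
    rcases hcon' _ _ hadj with h | h
    · exact ⟨(d.leaf x, b), (hmemP _).mpr ⟨hadj, h⟩⟩
    · exact ⟨(b, d.leaf x), (hmemP _).mpr ⟨hadj.symm, h⟩⟩
  obtain ⟨⟨u, v⟩, hpP, hpmin⟩ := Finset.exists_min_image P
    (fun p => (d.side p.1 p.2 ∩ S).card * (d.n + 1) +
      (Finset.univ.filter fun t => (d.tree.deleteEdges {s(p.1,p.2)}).Reachable t p.1).card) hPne
  rw [hmemP] at hpP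
  dsimp only at hpP
  obtain ⟨huv, hbig⟩ := hpP
  -- degree of u is at least 2
  have hdeg1 : d.tree.degree u ≠ 1 := by
    intro h1
    have := wt_of_degree_one huv h1 S
    omega
  have hdegpos : 0 < d.tree.degree u := by
    rw [← SimpleGraph.card_neighborFinset_eq_degree]
    exact Finset.card_pos.mpr ⟨v, (d.tree.mem_neighborFinset u v).mpr huv⟩
  have hdeg : 2 ≤ d.tree.degree u := by omega
  -- decompose the side
  set N := (d.tree.neighborFinset u).erase v with hN
  have hNcard : N.card ≤ 2 := by
    have hv : v ∈ d.tree.neighborFinset u := (d.tree.mem_neighborFinset u v).mpr huv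
    have h1 := Finset.card_erase_of_mem hv
    rw [← hN] at h1
    have h2 := d.subcubic u
    rw [← SimpleGraph.card_neighborFinset_eq_degree] at h2
    omega
  have hsum : (d.side u v ∩ S).card = ∑ a ∈ N, (d.side a u ∩ S).card := wt_eq_sum huv hdeg S
  have hNne : N.Nonempty := by
    rcases Finset.eq_empty_or_nonempty N with h | h
    · exfalso
      rw [h, Finset.sum_empty] at hsum
      omega
    · exact h
  obtain ⟨a, haN, hamax⟩ := Finset.exists_max_image N (fun a => (d.side a u ∩ S).card) hNne
  have hsumle : (d.side u v ∩ S).card ≤ 2 * (d.side a u ∩ S).card := by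
    calc (d.side u v ∩ S).card = ∑ b ∈ N, (d.side b u ∩ S).card := hsum
    _ ≤ N.card • (d.side a u ∩ S).card :=
        Finset.sum_le_card_nsmul _ _ _ (fun b hb => hamax b hb)
    _ = N.card * (d.side a u ∩ S).card := by rw [smul_eq_mul]
    _ ≤ 2 * (d.side a u ∩ S).card := Nat.mul_le_mul_right _ hNcard
  rw [hN, Finset.mem_erase, SimpleGraph.mem_neighborFinset] at haN
  obtain ⟨hav, hua⟩ := haN
  -- the edge (a, u) is also in P
  have hau_big : 2 * S.card < 3 * (d.side a u ∩ S).card := by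
    rcases hcon' a u hua.symm with h | h
    · exact h
    · have hcompl : (d.side a u ∩ S).card + (d.side u a ∩ S).card = S.card :=
        wt_add_wt hua.symm S
      omega
  have haP : (a, u) ∈ P := (hmemP _).mpr ⟨hua.symm, hau_big⟩
  have hmin := hpmin _ haP
  dsimp only at hmin
  -- but the measure strictly decreased
  have hWle : (d.side a u ∩ S).card ≤ (d.side u v ∩ S).card :=
    Finset.card_le_card (Finset.inter_subset_inter_right (side_subset_side huv hua hav))
  have hClt : (Finset.univ.filter fun t => (d.tree.deleteEdges {s(a,u)}).Reachable t a).card <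
      (Finset.univ.filter fun t => (d.tree.deleteEdges {s(u,v)}).Reachable t u).card :=
    ct_lt_ct huv hua hav
  have hCle1 := hCle a u
  have hCle2 := hCle u v
  rcases Nat.lt_or_ge (d.side a u ∩ S).card (d.side u v ∩ S).card with hlt | hge
  · have hmul : ((d.side a u ∩ S).card + 1) * (d.n + 1) ≤ (d.side u v ∩ S).card * (d.n + 1) :=
      Nat.mul_le_mul_right _ hlt
    rw [Nat.add_mul, Nat.one_mul] at hmul
    omega
  · have heq : (d.side a u ∩ S).card = (d.side u v ∩ S).card := le_antisymm hWle hge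
    rw [heq] at hmin
    omega

end RW
end DecompLemmas
section Caterpillar
open SimpleGraph

namespace RW

/-- Graph on `Fin n` induced by a parent function. -/
def pgraph (n : ℕ) (p : ℕ → ℕ) : SimpleGraph (Fin n) :=
  SimpleGraph.fromRel (fun a b => a.1 ≠ 0 ∧ b.1 = p a.1)

variable {n : ℕ} {p : ℕ → ℕ}

lemma pgraph_adj (hp : ∀ k, k ≠ 0 → p k < k) {a b : Fin n} :
    (pgraph n p).Adj a b ↔ ((a.1 ≠ 0 ∧ b.1 = p a.1) ∨ (b.1 ≠ 0 ∧ a.1 = p b.1)) := by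
  rw [pgraph, SimpleGraph.fromRel_adj]
  constructor
  · rintro ⟨-, h⟩; exact h
  · intro h
    refine ⟨?_, h⟩
    rcases h with ⟨h0, hb⟩ | ⟨h0, ha⟩
    · intro hab
      have := hp a.1 h0
      omega
    · intro hab
      have := hp b.1 h0
      omega

lemma pgraph_reach_zero (hp : ∀ k, k ≠ 0 → p k < k) (hn : 0 < n) (a : Fin n) :
    (pgraph n p).Reachable a ⟨0, hn⟩ := by
  obtain ⟨k, hk⟩ := a
  induction k using Nat.strong_induction_on with
  | _ k ih =>
    rcases Nat.eq_zero_or_pos k with rfl | hkpos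
    · exact SimpleGraph.Reachable.refl _
    · have hpk : p k < k := hp k (by omega)
      have hadj : (pgraph n p).Adj ⟨k, hk⟩ ⟨p k, by omega⟩ := by
        rw [pgraph_adj hp]
        exact Or.inl ⟨show k ≠ 0 by omega, rfl⟩
      exact hadj.reachable.trans (ih (p k) hpk (by omega))

lemma pgraph_connected (hp : ∀ k, k ≠ 0 → p k < k) (hn : 0 < n) :
    (pgraph n p).Connected := by
  rw [SimpleGraph.connected_iff]
  refine ⟨fun a b => ?_, ⟨⟨0, hn⟩⟩⟩
  exact (pgraph_reach_zero hp hn a).trans (pgraph_reach_zero hp hn b).symm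

/-- the "descendant" relation: one parent step. -/
def pstep (p : ℕ → ℕ) (a b : Fin n) : Prop := a.1 ≠ 0 ∧ b.1 = p a.1

lemma pgraph_rtg_le (hp : ∀ k, k ≠ 0 → p k < k) {t k : Fin n}
    (h : Relation.ReflTransGen (pstep p) t k) : k.1 ≤ t.1 := by
  induction h with
  | refl => exact le_refl _
  | tail hab hbc ih =>
    obtain ⟨h0, hc⟩ := hbc
    have := hp _ h0
    omega

lemma pgraph_del_closed (hp : ∀ k, k ≠ 0 → p k < k) {k : Fin n} (hk : k.1 ≠ 0)
    {kp : Fin n} (hkp : kp.1 = p k.1) {j j' : Fin n}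
    (hadj : ((pgraph n p).deleteEdges {s(k, kp)}).Adj j j')
    (hj : Relation.ReflTransGen (pstep p) j k) :
    Relation.ReflTransGen (pstep p) j' k := by
  rw [SimpleGraph.deleteEdges_adj] at hadj
  obtain ⟨hadj, hne⟩ := hadj
  rw [Set.mem_singleton_iff] at hne
  rw [pgraph_adj hp] at hadj
  rcases hadj with ⟨h0, hpar⟩ | ⟨h0, hpar⟩
  · -- j' is the parent of j
    have hjk : j ≠ k := by
      rintro rfl
      apply hne
      have : j' = kp := Fin.ext (by omega)
      rw [this]
    rcases Relation.ReflTransGen.cases_head hj with rfl | ⟨b, hstep, hrest⟩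
    · exact absurd rfl hjk
    · have : b = j' := Fin.ext (by rw [hstep.2, hpar])
      rwa [← this]
  · -- j is the parent of j'
    exact Relation.ReflTransGen.head ⟨h0, hpar⟩ hj

lemma pgraph_del_walk (hp : ∀ k, k ≠ 0 → p k < k) {k : Fin n} (hk : k.1 ≠ 0)
    {kp : Fin n} (hkp : kp.1 = p k.1) :
    ∀ {x y : Fin n} (_ : ((pgraph n p).deleteEdges {s(k, kp)}).Walk x y)
      (_ : Relation.ReflTransGen (pstep p) x k), Relation.ReflTransGen (pstep p) y k := by
  intro x y w
  induction w with
  | nil => exact fun h => h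
  | cons hadj q ih => exact fun h => ih (pgraph_del_closed hp hk hkp hadj h)

lemma pgraph_acyclic (hp : ∀ k, k ≠ 0 → p k < k) : (pgraph n p).IsAcyclic := by
  rw [SimpleGraph.isAcyclic_iff_forall_adj_isBridge]
  intro v w hadj
  rw [SimpleGraph.isBridge_iff]
  intro hreach
  have hr : ((pgraph n p).deleteEdges {s(v, w)}).Reachable v w := hreach
  rcases (pgraph_adj hp).mp hadj with ⟨h0, hpar⟩ | ⟨h0, hpar⟩
  · -- w is the parent of v : delete s(v,w), v plays role of k
    obtain ⟨wk⟩ := hr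
    have := pgraph_del_walk hp h0 hpar wk Relation.ReflTransGen.refl
    have hle := pgraph_rtg_le hp this
    have := hp v.1 h0
    omega
  · -- v is the parent of w
    obtain ⟨wk⟩ := hr.symm
    have hswap : ({s(v, w)} : Set (Sym2 (Fin n))) = {s(w, v)} := by rw [Sym2.eq_swap]
    rw [hswap] at wk
    have := pgraph_del_walk hp h0 hpar wk Relation.ReflTransGen.refl
    have hle := pgraph_rtg_le hp this
    have := hp w.1 h0
    omega

lemma pgraph_isTree (hp : ∀ k, k ≠ 0 → p k < k) (hn : 0 < n) : (pgraph n p).IsTree :=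
  ⟨pgraph_connected hp hn, pgraph_acyclic hp⟩

open Classical in
lemma pgraph_degree_eq (hp : ∀ k, k ≠ 0 → p k < k) (t : Fin n) :
    (pgraph n p).degree t =
      ((Finset.range n).filter
        (fun k => (t.1 ≠ 0 ∧ k = p t.1) ∨ (k ≠ 0 ∧ t.1 = p k))).card := by
  rw [← SimpleGraph.card_neighborFinset_eq_degree]
  apply Finset.card_bij (fun b _ => b.1)
  · intro b hb
    rw [SimpleGraph.mem_neighborFinset, pgraph_adj hp] at hb
    rw [Finset.mem_filter, Finset.mem_range]
    exact ⟨b.2, hb⟩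
  · intro a ha b hb h
    exact Fin.ext h
  · intro k hk
    rw [Finset.mem_filter, Finset.mem_range] at hk
    refine ⟨⟨k, hk.1⟩, ?_, rfl⟩
    rw [SimpleGraph.mem_neighborFinset, pgraph_adj hp]
    exact hk.2

end RW
end Caterpillar
section CatCount
namespace RW

/-- Parent function of the caterpillar tree on `2m-2` vertices:
vertices `0, …, m-3` form the spine, vertices `m-2, …, 2m-3` are the leaves. -/
def catp (m k : ℕ) : ℕ :=
  if k ≤ m - 3 then k - 1 else if k ≤ 2*m - 4 then k - (m-1) else m - 3

lemma catp_lt (m : ℕ) : ∀ k, k ≠ 0 → catp m k < k := by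
  intro k hk
  unfold catp
  split_ifs <;> omega

lemma cat_count_leaf {m n : ℕ} (hm : 2 ≤ m) (hn : n = 2*m - 2) {i : ℕ}
    (hi : m - 2 ≤ i) (hin : i < n) :
    ((Finset.range n).filter
      (fun k => (i ≠ 0 ∧ k = catp m i) ∨ (k ≠ 0 ∧ i = catp m k))).card = 1 := by
  rw [Finset.card_eq_one]
  refine ⟨if i = 0 then 1 else catp m i, ?_⟩
  ext k
  simp only [Finset.mem_filter, Finset.mem_range, Finset.mem_singleton]
  unfold catp
  split_ifs <;> omega

lemma cat_count_spine {m n : ℕ} (hm : 3 ≤ m) (hn : n = 2*m - 2) {i : ℕ}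
    (hi : i ≤ m - 3) :
    ((Finset.range n).filter
      (fun k => (i ≠ 0 ∧ k = catp m i) ∨ (k ≠ 0 ∧ i = catp m k))).card = 3 := by
  rw [Finset.card_eq_three]
  refine ⟨if i = 0 then 1 else i - 1,
    if i = 0 then (if m = 3 then 2 else m - 2) else (if i ≤ m - 4 then i + 1 else 2*m - 4),
    if i = 0 then (if m = 3 then 3 else m - 1) else (if i ≤ m - 4 then m - 1 + i else 2*m - 3),
    ?_, ?_, ?_, ?_⟩
  · split_ifs <;> omega
  · split_ifs <;> omega
  · split_ifs <;> omega
  · ext k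
    simp only [Finset.mem_filter, Finset.mem_range, Finset.mem_insert, Finset.mem_singleton]
    unfold catp
    split_ifs <;> omega

end RW
end CatCount
lemma RW.rankDecomp_nonempty' {V : Type*} [Fintype V] (h2 : 2 ≤ Fintype.card V) :
    Nonempty (RankDecomp V) := by
  classical
  set m := Fintype.card V with hm'
  have hm : 2 ≤ m := h2
  set n := 2*m - 2 with hn
  have hp := RW.catp_lt m
  have hp' : ∀ k, k ≠ 0 → RW.catp m k < k := fun k hk => hp k hk
  have hn2 : 0 < n := by omega
  let e : V ≃ Fin m := Fintype.equivFin V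
  have hleaflt : ∀ v : V, m - 2 + (e v).1 < n := by
    intro v
    have := (e v).2
    omega
  refine ⟨⟨n, RW.pgraph n (RW.catp m), RW.pgraph_isTree hp' hn2, ?_,
    fun v => ⟨m - 2 + (e v).1, hleaflt v⟩, ?_, ?_, ?_⟩⟩
  · -- subcubic
    intro t
    rw [RW.pgraph_degree_eq hp']
    rcases Nat.lt_or_ge t.1 (m - 2) with h | h
    · rw [RW.cat_count_spine (by omega) hn.symm (by omega)]
    · rw [RW.cat_count_leaf hm hn.symm h t.2]
      omega
  · -- leafDeg
    intro v
    rw [RW.pgraph_degree_eq hp']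
    exact RW.cat_count_leaf hm hn.symm (by simp) (hleaflt v)
  · -- leafInj
    intro v w h
    rw [Fin.mk.injEq] at h
    have : (e v) = (e w) := Fin.ext (by omega)
    exact e.injective this
  · -- leafSurj
    intro t ht
    rw [RW.pgraph_degree_eq hp'] at ht
    have htge : m - 2 ≤ t.1 := by
      by_contra hlt
      rw [RW.cat_count_spine (by omega) hn.symm (by omega)] at ht
      omega
    have htn : t.1 < n := t.2
    refine ⟨e.symm ⟨t.1 - (m - 2), by omega⟩, ?_⟩
    apply Fin.ext
    simp only [Equiv.apply_symm_apply]
    omega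
section RankLemmas

lemma RW.rank_submatrix_le'' {R : Type*} [CommRing R] [StrongRankCondition R]
    {m n l o : Type*} [Fintype m] [Fintype n] [Fintype l] [Fintype o]
    [DecidableEq m] [DecidableEq n]
    (A : Matrix m n R) (f : l → m) (g : o → n) : (A.submatrix f g).rank ≤ A.rank := by
  have h1 : (1 : Matrix m m R).submatrix f id * A = A.submatrix f id := by
    ext i j
    simp [Matrix.mul_apply, Matrix.one_apply, Matrix.submatrix_apply]
  have h2 : A.submatrix f id * (1 : Matrix n n R).submatrix id g = A.submatrix f g := by
    ext i j
    simp [Matrix.mul_apply, Matrix.one_apply, Matrix.submatrix_apply]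
  calc (A.submatrix f g).rank
      = ((1 : Matrix m m R).submatrix f id * A * (1 : Matrix n n R).submatrix id g).rank := by
        rw [h1, h2]
    _ ≤ ((1 : Matrix m m R).submatrix f id * A).rank := Matrix.rank_mul_le_left _ _
    _ ≤ A.rank := Matrix.rank_mul_le_right _ _

lemma RW.cutrank_mono {V : Type*} (G : SimpleGraph V) {X' X Y' Y : Finset V}
    (hX : X' ⊆ X) (hY : Y' ⊆ Y) : cutrank G X' Y' ≤ cutrank G X Y := by
  have heq : (Matrix.of fun (x : X') (y : Y') => if G.Adj x.1 y.1 then (1 : ZMod 2) else 0)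
      = (Matrix.of fun (x : X) (y : Y) => if G.Adj x.1 y.1 then (1 : ZMod 2) else 0).submatrix
        (fun x => (⟨x.1, hX x.2⟩ : X)) (fun y => (⟨y.1, hY y.2⟩ : Y)) := rfl
  rw [cutrank, cutrank, heq]
  exact RW.rank_submatrix_le'' _ _ _

lemma RW.cutrank_le_card {V : Type*} (G : SimpleGraph V) (X Y : Finset V) :
    cutrank G X Y ≤ X.card := by
  rw [cutrank]
  calc Matrix.rank _ ≤ Fintype.card X := Matrix.rank_le_card_height _
    _ = X.card := Fintype.card_coe _

end RankLemmas

theorem minBalCutrank_le_rankwidth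
    {V : Type*} [Fintype V] (G : SimpleGraph V) (S : Finset V) (hS : 2 ≤ S.card) :
    minBalCutrank G S ≤ rankwidth G := by
  classical
  have hVcard : 2 ≤ Fintype.card V := by
    calc 2 ≤ S.card := hS
      _ ≤ (Finset.univ : Finset V).card := Finset.card_le_card (Finset.subset_univ S)
      _ = Fintype.card V := Finset.card_univ
  obtain ⟨d0⟩ := RW.rankDecomp_nonempty' hVcard
  have hTne : {k | ∃ d : RankDecomp V, RankDecomp.widthLE G d k}.Nonempty := by
    refine ⟨Fintype.card V, d0, fun u v _ => ?_⟩
    calc cutrank G (d0.side u v) (d0.side v u) ≤ (d0.side u v).card :=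
          RW.cutrank_le_card G _ _
      _ ≤ (Finset.univ : Finset V).card := Finset.card_le_card (Finset.subset_univ _)
      _ = Fintype.card V := Finset.card_univ
  obtain ⟨d, hd⟩ := Nat.sInf_mem hTne
  obtain ⟨u, v, huv, h1, h2⟩ := RW.exists_balanced_edge d S hS
  have hbal : IsBalancedPartitionOf S (d.side u v ∩ S) (d.side v u ∩ S) := by
    refine ⟨?_, ?_, h1, h2⟩
    · rw [← Finset.union_inter_distrib_right, RW.side_union huv, Finset.univ_inter]
    · exact (RW.sides_disjoint huv).mono Finset.inter_subset_left Finset.inter_subset_left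
  have hle1 : minBalCutrank G S ≤ cutrank G (d.side u v ∩ S) (d.side v u ∩ S) :=
    Nat.sInf_le ⟨_, _, hbal, rfl⟩
  have hle2 : cutrank G (d.side u v ∩ S) (d.side v u ∩ S) ≤
      cutrank G (d.side u v) (d.side v u) :=
    RW.cutrank_mono G Finset.inter_subset_left Finset.inter_subset_left
  exact le_trans hle1 (le_trans hle2 (hd u v huv))
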